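/- Let α > 0, u > 0, ρ > −α, M ≥ 0, and let W : [0, ∞) → ℝ satisfy W(0) = 0 and |W(x) − W(y)| ≤ M|x − y|^α for all x, y in a neighborhood of 0. Define Y_{α,ρ}(u) for ρ > 0 as ρ ∫₀ᵘ (u−y)^{ρ−1} W(y) dy and for −α < ρ < 0 as u^ρ W(u) + |ρ| ∫₀ᵘ (W(u) − W(u−y)) y^{ρ−1} dy, and set Y_{α,0} = W. Then lim_{u→0+} Y_{α,ρ}(u) = 0. -/

import Mathlib

open Filter

theorem Y_tendsto_zero (α ρ M : ℝ) (hα : 0 < α) (hρ : -α < ρ) (hM : 0 ≤ M)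
    (W : ℝ → ℝ) (hW0 : W 0 = 0)
    (hH : ∃ ε > (0:ℝ), ∀ x ∈ Set.Icc (0:ℝ) ε, ∀ y ∈ Set.Icc (0:ℝ) ε,
      |W x - W y| ≤ M * |x - y| ^ α)
    (Y : ℝ → ℝ)
    (hYpos : 0 < ρ → ∀ u > (0:ℝ), Y u = ρ * ∫ y in (0:ℝ)..u, (u - y) ^ (ρ - 1) * W y)
    (hYneg : ρ < 0 → ∀ u > (0:ℝ),
      Y u = u ^ ρ * W u + |ρ| * ∫ y in (0:ℝ)..u, (W u - W (u - y)) * y ^ (ρ - 1))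
    (hYzero : ρ = 0 → Y = W) :
    Tendsto Y (nhdsWithin 0 (Set.Ioi 0)) (nhds 0) := by
  obtain ⟨ε, hε, hH⟩ := hH
  have hρα : 0 < ρ + α := by linarith
  have hdiv : 0 ≤ |ρ| / (ρ + α) := div_nonneg (abs_nonneg ρ) hρα.le
  have hWb : ∀ x ∈ Set.Icc (0:ℝ) ε, |W x| ≤ M * x ^ α := by
    intro x hx
    have := hH x hx 0 ⟨le_refl 0, hε.le⟩
    simpa [hW0, abs_of_nonneg hx.1] using this
  set C := M * (1 + |ρ| / (ρ + α)) with hC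
  have hMC : M ≤ C := by nlinarith
  have hC0 : 0 ≤ C := hM.trans hMC
  apply squeeze_zero_norm' (a := fun u => C * u ^ (ρ + α))
  · filter_upwards [Ioo_mem_nhdsGT_of_mem (Set.left_mem_Ico.mpr hε)] with u hu
    obtain ⟨hu0, huε⟩ := hu
    have huε' : u ≤ ε := huε.le
    have hX : (0:ℝ) ≤ u ^ (ρ + α) := Real.rpow_nonneg hu0.le _
    have hWu : |W u| ≤ M * u ^ α := hWb u ⟨hu0.le, huε'⟩
    rcases lt_trichotomy ρ 0 with h | h | h
    · -- ρ < 0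
      rw [hYneg h u hu0, Real.norm_eq_abs]
      have hint : IntervalIntegrable (fun y : ℝ => M * y ^ (α + ρ - 1)) MeasureTheory.volume 0 u :=
        (intervalIntegral.intervalIntegrable_rpow' (by linarith)).const_mul M
      have hbound : ∀ᵐ y ∂(MeasureTheory.volume.restrict (Set.uIoc 0 u)),
          ‖(W u - W (u - y)) * y ^ (ρ - 1)‖ ≤ M * y ^ (α + ρ - 1) := by
        refine MeasureTheory.ae_restrict_of_forall_mem measurableSet_uIoc fun y hy => ?_
        rw [Set.uIoc_of_le hu0.le] at hy
        obtain ⟨hy0, hyu⟩ := hy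
        have h1 : |W u - W (u - y)| ≤ M * y ^ α := by
          have := hH u ⟨hu0.le, huε'⟩ (u - y) ⟨by linarith, by linarith⟩
          simpa [abs_of_nonneg hy0.le] using this
        have h2 : (0:ℝ) ≤ y ^ (ρ - 1) := Real.rpow_nonneg hy0.le _
        calc ‖(W u - W (u - y)) * y ^ (ρ - 1)‖
            = |W u - W (u - y)| * y ^ (ρ - 1) := by
              rw [norm_mul, Real.norm_eq_abs, Real.norm_eq_abs, abs_of_nonneg h2]
          _ ≤ (M * y ^ α) * y ^ (ρ - 1) := by
              exact mul_le_mul_of_nonneg_right h1 h2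
          _ = M * y ^ (α + ρ - 1) := by
              rw [mul_assoc, ← Real.rpow_add hy0]; ring_nf
      have hIle := intervalIntegral.norm_integral_le_abs_of_norm_le hbound hint
      have hIval : ∫ y in (0:ℝ)..u, M * y ^ (α + ρ - 1) = M * (u ^ (ρ + α) / (ρ + α)) := by
        rw [intervalIntegral.integral_const_mul, integral_rpow (Or.inl (by linarith))]
        rw [Real.zero_rpow (by linarith : α + ρ - 1 + 1 ≠ 0)]
        ring_nf
      rw [hIval] at hIle
      have habs : |M * (u ^ (ρ + α) / (ρ + α))| = M * (u ^ (ρ + α) / (ρ + α)) := by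
        rw [abs_of_nonneg]; positivity
      rw [habs] at hIle
      have ht1 : |u ^ ρ * W u| ≤ M * u ^ (ρ + α) := by
        rw [abs_mul, abs_of_nonneg (Real.rpow_nonneg hu0.le ρ)]
        calc u ^ ρ * |W u| ≤ u ^ ρ * (M * u ^ α) := by
              exact mul_le_mul_of_nonneg_left hWu (Real.rpow_nonneg hu0.le ρ)
          _ = M * u ^ (ρ + α) := by rw [Real.rpow_add hu0]; ring
      calc |u ^ ρ * W u + |ρ| * ∫ y in (0:ℝ)..u, (W u - W (u - y)) * y ^ (ρ - 1)|
          ≤ |u ^ ρ * W u| + |ρ| * ‖∫ y in (0:ℝ)..u, (W u - W (u - y)) * y ^ (ρ - 1)‖ := by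
            rw [Real.norm_eq_abs]
            refine (abs_add_le _ _).trans ?_
            rw [abs_mul |ρ|, abs_abs]
        _ ≤ M * u ^ (ρ + α) + |ρ| * (M * (u ^ (ρ + α) / (ρ + α))) := by
            exact add_le_add ht1 (mul_le_mul_of_nonneg_left hIle (abs_nonneg ρ))
        _ = C * u ^ (ρ + α) := by rw [hC]; field_simp
    · -- ρ = 0
      subst h
      rw [hYzero rfl]
      calc ‖W u‖ ≤ M * u ^ α := by rwa [Real.norm_eq_abs]
        _ ≤ C * u ^ (0 + α) := by
            rw [zero_add]
            exact mul_le_mul_of_nonneg_right hMC (Real.rpow_nonneg hu0.le _)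
    · -- 0 < ρ
      rw [hYpos h u hu0]
      have hint : IntervalIntegrable (fun y : ℝ => M * u ^ α * (u - y) ^ (ρ - 1))
          MeasureTheory.volume 0 u := by
        have h1 : IntervalIntegrable (fun y : ℝ => y ^ (ρ - 1)) MeasureTheory.volume 0 u :=
          intervalIntegral.intervalIntegrable_rpow' (by linarith)
        have h2 := (h1.comp_sub_left u).const_mul (M * u ^ α)
        simpa using h2.symm
      have hbound : ∀ᵐ y ∂(MeasureTheory.volume.restrict (Set.uIoc 0 u)),
          ‖(u - y) ^ (ρ - 1) * W y‖ ≤ M * u ^ α * (u - y) ^ (ρ - 1) := by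
        refine MeasureTheory.ae_restrict_of_forall_mem measurableSet_uIoc fun y hy => ?_
        rw [Set.uIoc_of_le hu0.le] at hy
        obtain ⟨hy0, hyu⟩ := hy
        have h2 : (0:ℝ) ≤ (u - y) ^ (ρ - 1) := Real.rpow_nonneg (by linarith) _
        have hWy : |W y| ≤ M * u ^ α := by
          refine (hWb y ⟨hy0.le, hyu.trans huε'⟩).trans ?_
          exact mul_le_mul_of_nonneg_left (Real.rpow_le_rpow hy0.le hyu hα.le) hM
        calc ‖(u - y) ^ (ρ - 1) * W y‖ = (u - y) ^ (ρ - 1) * |W y| := by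
              rw [norm_mul, Real.norm_eq_abs, Real.norm_eq_abs, abs_of_nonneg h2]
          _ ≤ (u - y) ^ (ρ - 1) * (M * u ^ α) := mul_le_mul_of_nonneg_left hWy h2
          _ = M * u ^ α * (u - y) ^ (ρ - 1) := by ring
      have hIle := intervalIntegral.norm_integral_le_abs_of_norm_le hbound hint
      have hIval : ∫ y in (0:ℝ)..u, M * u ^ α * (u - y) ^ (ρ - 1)
          = M * u ^ α * (u ^ ρ / ρ) := by
        rw [intervalIntegral.integral_const_mul]
        congr 1
        have hcs := intervalIntegral.integral_comp_sub_left
          (a := (0:ℝ)) (b := u) (fun y : ℝ => y ^ (ρ - 1)) u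
        rw [hcs, sub_self, sub_zero, integral_rpow (Or.inl (by linarith))]
        rw [sub_add_cancel, Real.zero_rpow h.ne']
        ring
      rw [hIval] at hIle
      have habs : |M * u ^ α * (u ^ ρ / ρ)| = M * u ^ α * (u ^ ρ / ρ) := by
        rw [abs_of_nonneg]
        have := Real.rpow_nonneg hu0.le α
        have := Real.rpow_nonneg hu0.le ρ
        positivity
      rw [habs] at hIle
      calc ‖ρ * ∫ y in (0:ℝ)..u, (u - y) ^ (ρ - 1) * W y‖
          = ρ * ‖∫ y in (0:ℝ)..u, (u - y) ^ (ρ - 1) * W y‖ := by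
            rw [norm_mul, Real.norm_eq_abs, abs_of_pos h]
        _ ≤ ρ * (M * u ^ α * (u ^ ρ / ρ)) := mul_le_mul_of_nonneg_left hIle h.le
        _ = M * u ^ (ρ + α) := by
            rw [Real.rpow_add hu0]; field_simp
        _ ≤ C * u ^ (ρ + α) := mul_le_mul_of_nonneg_right hMC hX
  · have h1 : Tendsto (fun u : ℝ => u ^ (ρ + α)) (nhds 0) (nhds 0) := by
      have := (Real.continuousAt_rpow_const 0 (ρ + α) (Or.inr hρα.le)).tendsto
      simpa [Real.zero_rpow hρα.ne'] using this
    have := (h1.const_mul C).mono_left (nhdsWithin_le_nhds (s := Set.Ioi (0:ℝ)))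
    simpa using this
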